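/- arXiv:2206.09876 — 5 statements merged into one kernel-verified Lean document; each statement's English description precedes it below -/
import Mathlib

section
/- For all integers $k \ge 2$ and even integers $b$ with $2 \le b \le 2k$, the inequality $\binom{2k}{b} \ge (2k+1-b)\binom{k}{b/2}$ holds. -/
lemma le_choose_of_lt (k m : ℕ) (hm : 1 ≤ m) (hmk : m < k) : k ≤ k.choose m := by
  induction k with
  | zero => omega
  | succ n ih =>
    rcases Nat.eq_or_lt_of_le hm with h1 | h2
    · simp [← h1]
    · rcases Nat.eq_or_lt_of_le (Nat.lt_succ_iff.mp hmk) with h3 | h4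
      · rw [h3, Nat.choose_succ_self_right]
      · have hms : m - 1 + 1 = m := by omega
        have h5 := ih (by omega)
        have hsplit := Nat.choose_succ_succ n (m - 1)
        simp only [Nat.succ_eq_add_one, hms] at hsplit
        have hpos := Nat.choose_pos (n := n) (k := m - 1) (by omega)
        omega

lemma key (k j : ℕ) (h1 : 1 ≤ j) (h2 : j ≤ k) :
    2 * j * Nat.choose k j ≤ Nat.choose (2 * k) (2 * j - 1) := by
  have hj : j ≤ Nat.choose k (j - 1) := by
    rcases Nat.eq_or_lt_of_le h1 with h | h
    · simp [← h]
    · exact le_trans h2 (le_choose_of_lt k (j-1) (by omega) (by omega))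
  rw [two_mul k, Nat.add_choose_eq]
  have hmem1 : ((j - 1, j) : ℕ × ℕ) ∈ Finset.HasAntidiagonal.antidiagonal (2 * j - 1) := by
    rw [Finset.HasAntidiagonal.mem_antidiagonal]; omega
  have hmem2 : ((j, j - 1) : ℕ × ℕ) ∈ Finset.HasAntidiagonal.antidiagonal (2 * j - 1) := by
    rw [Finset.HasAntidiagonal.mem_antidiagonal]; omega
  have hsub : ({(j - 1, j), (j, j - 1)} : Finset (ℕ × ℕ)) ⊆
      Finset.HasAntidiagonal.antidiagonal (2 * j - 1) := by
    intro x hx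
    rcases Finset.mem_insert.mp hx with h | h
    · exact h ▸ hmem1
    · exact (Finset.mem_singleton.mp h) ▸ hmem2
  have hne : ((j - 1, j) : ℕ × ℕ) ≠ (j, j - 1) := by
    intro h; injection h with h' _; omega
  calc 2 * j * Nat.choose k j
      ≤ 2 * (Nat.choose k (j - 1) * Nat.choose k j) := by
        rw [mul_assoc]
        exact Nat.mul_le_mul_left 2 (Nat.mul_le_mul_right _ hj)
    _ = Nat.choose k (j-1) * Nat.choose k j + Nat.choose k j * Nat.choose k (j-1) := by ring
    _ = ∑ ij ∈ ({(j - 1, j), (j, j - 1)} : Finset (ℕ × ℕ)),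
          Nat.choose k ij.1 * Nat.choose k ij.2 := by
        rw [Finset.sum_pair hne]
    _ ≤ ∑ ij ∈ Finset.HasAntidiagonal.antidiagonal (2 * j - 1), Nat.choose k ij.1 * Nat.choose k ij.2 :=
        Finset.sum_le_sum_of_subset hsub

theorem choose_ineq (k b : ℕ) (hk : 2 ≤ k) (hb : Even b) (hb2 : 2 ≤ b) (hble : b ≤ 2 * k) :
    (2 * k + 1 - b) * Nat.choose k (b / 2) ≤ Nat.choose (2 * k) b := by
  obtain ⟨j, hj⟩ := hb
  have hj1 : 1 ≤ j := by omega
  have hj2 : j ≤ k := by omega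
  have hbj : b = 2 * j := by omega
  subst hbj
  have hdvd : 2 * j / 2 = j := by omega
  rw [hdvd]
  have hrec : Nat.choose (2 * k) (2 * j) * (2 * j) =
      Nat.choose (2 * k) (2 * j - 1) * (2 * k - (2 * j - 1)) := by
    have h := Nat.choose_succ_right_eq (2 * k) (2 * j - 1)
    have : 2 * j - 1 + 1 = 2 * j := by omega
    rw [this] at h
    exact h
  have hkey := key k j hj1 hj2
  have hpos : 0 < 2 * j := by omega
  refine Nat.le_of_mul_le_mul_left ?_ hpos
  calc 2 * j * ((2 * k + 1 - 2 * j) * Nat.choose k j)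
      = (2 * k - (2 * j - 1)) * (2 * j * Nat.choose k j) := by
        have : 2 * k + 1 - 2 * j = 2 * k - (2 * j - 1) := by omega
        rw [this]; ring
    _ ≤ (2 * k - (2 * j - 1)) * Nat.choose (2 * k) (2 * j - 1) :=
        Nat.mul_le_mul_left _ hkey
    _ = 2 * j * Nat.choose (2 * k) (2 * j) := by rw [mul_comm] at hrec ⊢; omega
end

section
/- Fix $r > 0$ and positive integers $d$ and $m \ge 2r$. Embed $\mathbb{Z}_m$ in $\mathbb{Z}$ using coset representatives $x$ with $-m/2 < x \le m/2$, and let $|x|$ denote the Euclidean norm of the representative of $x \in \mathbb{Z}_m^d$. Suppose $g: \mathbb{Z}^d \to \mathbb{R}$ satisfies $g(x) \le 0$ for all $x \in \mathbb{Z}^d$ with $|x| \ge r$, and $g \in L^1(\mathbb{Z}^d)$. Define $g_m(x) = \sum_{n \in m\mathbb{Z}^d} g(x+n)$. Then $g_m(x) \le 0$ for all $x \in \mathbb{Z}_m^d$ with $|x| \ge r$, and $g_m(0) \le g(0)$. -/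
open scoped BigOperators

/-- The coset representative of `a : ℤ/mℤ` lying in the interval `(-m/2, m/2]`. -/
def srep (m : ℕ) [NeZero m] (a : ZMod m) : ℤ :=
  if 2 * a.val ≤ m then (a.val : ℤ) else (a.val : ℤ) - m

/-- Euclidean norm of an integer vector. -/
noncomputable def enormZ (d : ℕ) (x : Fin d → ℤ) : ℝ :=
  Real.sqrt (∑ i, ((x i : ℝ)) ^ 2)

/-- Periodization of `g : ℤ^d → ℝ` to `ℤ_m^d`, using representatives in `(-m/2, m/2]`. -/
noncomputable def periodize (m d : ℕ) [NeZero m] (g : (Fin d → ℤ) → ℝ)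
    (x : Fin d → ZMod m) : ℝ :=
  ∑' n : Fin d → ℤ, g (fun i => srep m (x i) + m * n i)

lemma two_abs_srep_le (m : ℕ) [NeZero m] (a : ZMod m) : 2 * |srep m a| ≤ m := by
  unfold srep
  have hv : a.val < m := ZMod.val_lt a
  split
  · next h =>
    rw [abs_of_nonneg (Int.natCast_nonneg _)]; omega
  · next h =>
    rw [abs_of_nonpos (by omega)]; omega

lemma abs_le_abs_add_mul (m : ℕ) (s k : ℤ) (hs : 2 * |s| ≤ m) :
    |s| ≤ |s + m * k| := by
  rcases eq_or_ne k 0 with rfl | hk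
  · simp
  · have h1 : (m : ℤ) ≤ |(m : ℤ) * k| := by
      rw [abs_mul, abs_of_nonneg (by positivity : (0:ℤ) ≤ (m:ℤ))]
      nlinarith [Int.one_le_abs hk, Int.natCast_nonneg m]
    have h2 : |(m : ℤ) * k| ≤ |s + m * k| + |s| := by
      have := abs_add_le (s + m * k) (-s)
      simpa using this
    omega

lemma srep_zero (m : ℕ) [NeZero m] : srep m 0 = 0 := by
  unfold srep
  simp [ZMod.val_zero]

lemma enormZ_le (d : ℕ) (x y : Fin d → ℤ) (h : ∀ i, |x i| ≤ |y i|) :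
    enormZ d x ≤ enormZ d y := by
  apply Real.sqrt_le_sqrt
  apply Finset.sum_le_sum
  intro i _
  have : |(x i : ℝ)| ≤ |(y i : ℝ)| := by
    rw [← Int.cast_abs, ← Int.cast_abs]; exact_mod_cast h i
  calc (x i : ℝ)^2 = |(x i : ℝ)|^2 := (sq_abs _).symm
    _ ≤ |(y i : ℝ)|^2 := by nlinarith [abs_nonneg ((x i : ℝ))]
    _ = (y i : ℝ)^2 := sq_abs _

lemma single_le_enormZ (d : ℕ) (x : Fin d → ℤ) (i : Fin d) :
    |(x i : ℝ)| ≤ enormZ d x := by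
  rw [← Real.sqrt_sq_eq_abs]
  apply Real.sqrt_le_sqrt
  exact Finset.single_le_sum (fun j _ => sq_nonneg ((x j : ℝ))) (Finset.mem_univ i)

theorem periodize_nonpos_outside_and_le_at_zero (m d : ℕ) [NeZero m] (r : ℝ) (hr : 0 < r)
    (hd : 0 < d) (hm : 2 * r ≤ (m : ℝ)) (g : (Fin d → ℤ) → ℝ)
    (hg : Summable fun x => |g x|)
    (hneg : ∀ x : Fin d → ℤ, r ≤ enormZ d x → g x ≤ 0) :
    (∀ x : Fin d → ZMod m, r ≤ enormZ d (fun i => srep m (x i)) → periodize m d g x ≤ 0) ∧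
    periodize m d g 0 ≤ g 0 := by
  have hgs : Summable g := hg.of_abs
  constructor
  · intro x hx
    apply tsum_nonpos
    intro n
    apply hneg
    refine le_trans hx (enormZ_le d _ _ ?_)
    intro i
    exact abs_le_abs_add_mul m _ _ (two_abs_srep_le m (x i))
  · have hinj : Function.Injective (fun (n : Fin d → ℤ) => fun i => srep m ((0 : Fin d → ZMod m) i) + (m : ℤ) * n i) := by
      intro a b hab
      funext i
      have := congrFun hab i
      simp only at this
      have hm0 : (m : ℤ) ≠ 0 := by exact_mod_cast (NeZero.ne m)
      have : (m:ℤ) * a i = (m:ℤ) * b i := by omega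
      exact mul_left_cancel₀ hm0 this
    have hsum : Summable (fun (n : Fin d → ℤ) => g (fun i => srep m ((0 : Fin d → ZMod m) i) + (m : ℤ) * n i)) :=
      hgs.comp_injective hinj
    have key : ∀ n : Fin d → ℤ, n ≠ 0 → g (fun i => srep m ((0 : Fin d → ZMod m) i) + (m : ℤ) * n i) ≤ 0 := by
      intro n hn
      apply hneg
      obtain ⟨i, hi⟩ := Function.ne_iff.mp hn
      have h1 : (m : ℝ) ≤ |((srep m ((0 : Fin d → ZMod m) i) + (m : ℤ) * n i : ℤ) : ℝ)| := by
        rw [← Int.cast_abs]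
        have : (m : ℤ) ≤ |srep m ((0 : Fin d → ZMod m) i) + (m : ℤ) * n i| := by
          simp only [Pi.zero_apply, srep_zero, zero_add, abs_mul,
            abs_of_nonneg (Int.natCast_nonneg m)]
          nlinarith [Int.one_le_abs (show n i ≠ 0 by simpa using hi), Int.natCast_nonneg m]
        exact_mod_cast this
      have := single_le_enormZ d (fun i => srep m ((0 : Fin d → ZMod m) i) + (m : ℤ) * n i) i
      linarith
    have h0 : g (fun i => srep m ((0 : Fin d → ZMod m) i) + (m : ℤ) * (0 : Fin d → ℤ) i) = g 0 := by
      congr 1; funext i; simp [srep_zero]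
    calc periodize m d g 0
        = g (fun i => srep m ((0 : Fin d → ZMod m) i) + (m : ℤ) * (0 : Fin d → ℤ) i)
          + ∑' n : Fin d → ℤ, if n = 0 then 0 else g (fun i => srep m ((0 : Fin d → ZMod m) i) + (m : ℤ) * n i) := by
          exact Summable.tsum_eq_add_tsum_ite hsum 0
      _ ≤ g 0 + 0 := by
          refine add_le_add (le_of_eq h0) (tsum_nonpos ?_)
          intro n
          split
          · exact le_rfl
          · next hn => exact key n hn
      _ = g 0 := add_zero _
end

section
/- Fix $r > 0$, positive integers $m, d$. Suppose $\mu, \lambda: \mathbb{Z}_m^d \to \mathbb{R}$ are even, $\lambda = \widehat\mu$, $\lambda(y) \ge 0$ for all $y$, $\mu(x) \ge 0$ for all $|x| \ge r$, $\mu(x) = 0$ for $0 < |x| < r$, and $\mu(0) = (r/2)^d$. Then every even function $f: \mathbb{Z}_m^d \to \mathbb{R}$ with $\widehat f(0) \ge m^{-d/2}$, $f(x) \le 0$ for $|x| \ge r$, and $\widehat f(y) \ge 0$ for all $y$, satisfies $(r/2)^d f(0) \ge m^{-d/2} \lambda(0)$. -/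
open scoped BigOperators

/-- Discrete Fourier transform on `ℤ_m^d`, normalized by `m^(-d/2)`. -/
noncomputable def dft (m d : ℕ) [NeZero m] (f : (Fin d → ZMod m) → ℂ)
    (y : Fin d → ZMod m) : ℂ :=
  ((Real.sqrt (m ^ d) : ℝ) : ℂ)⁻¹ *
    ∑ x : Fin d → ZMod m, f x *
      Complex.exp (-(2 * Real.pi * Complex.I * (∑ i, ((x i).val : ℂ) * ((y i).val : ℂ)) / m))

/-- Euclidean norm of an element of `ℤ_m^d`, via representatives in `(-m/2, m/2]`. -/
noncomputable def znorm (m d : ℕ) [NeZero m] (x : Fin d → ZMod m) : ℝ :=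
  Real.sqrt (∑ i, ((srep m (x i) : ℝ)) ^ 2)

lemma sum_zmod_exp (m : ℕ) [NeZero m] (a : ℕ) :
    ∑ y : ZMod m, Complex.exp (-(2 * Real.pi * Complex.I * a * (y.val : ℂ) / m)) =
      if (a : ZMod m) = 0 then (m : ℂ) else 0 := by
  have hm : (m : ℂ) ≠ 0 := Nat.cast_ne_zero.2 (NeZero.ne m)
  set ζ : ℂ := Complex.exp (-(2 * Real.pi * Complex.I * a / m)) with hζ
  have hterm : ∀ y : ZMod m,
      Complex.exp (-(2 * Real.pi * Complex.I * a * (y.val : ℂ) / m)) = ζ ^ y.val := by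
    intro y
    rw [hζ, ← Complex.exp_nat_mul]
    congr 1
    ring
  simp_rw [hterm]
  have hsum : ∑ y : ZMod m, ζ ^ y.val = ∑ k ∈ Finset.range m, ζ ^ k := by
    refine Finset.sum_nbij' (fun y => y.val) (fun k => (k : ZMod m)) ?_ ?_ ?_ ?_ ?_
    · intro y _; exact Finset.mem_range.2 (ZMod.val_lt y)
    · intro k _; exact Finset.mem_univ _
    · intro y _; exact ZMod.natCast_rightInverse y
    · intro k hk; exact ZMod.val_cast_of_lt (Finset.mem_range.1 hk)
    · intro y _; rfl
  rw [hsum]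
  by_cases h : (a : ZMod m) = 0
  · obtain ⟨b, hb⟩ := (ZMod.natCast_eq_zero_iff a m).1 h
    have hζ1 : ζ = 1 := by
      rw [hζ, hb]
      convert Complex.exp_int_mul_two_pi_mul_I (-(b : ℤ)) using 2
      push_cast
      field_simp
    simp [hζ1, h]
  · have hζne : ζ ≠ 1 := by
      intro h1
      rw [hζ, Complex.exp_eq_one_iff] at h1
      obtain ⟨n, hn⟩ := h1
      have hpi : (2 * (Real.pi : ℂ) * Complex.I) ≠ 0 := by
        simp [Real.pi_ne_zero, Complex.I_ne_zero]
      field_simp at hn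
      have h2 : (2 * (Real.pi : ℂ) * Complex.I) * (a : ℂ)
          = (2 * (Real.pi : ℂ) * Complex.I) * (((-n) * m : ℤ) : ℂ) := by
        push_cast
        linear_combination (-(2 * (Real.pi : ℂ) * Complex.I)) * hn
      have h3 : (a : ℂ) = (((-n) * m : ℤ) : ℂ) := mul_left_cancel₀ hpi h2
      have h4 : (a : ℤ) = (-n) * m := by exact_mod_cast h3
      exact h ((ZMod.natCast_eq_zero_iff a m).2
        (Int.natCast_dvd_natCast.1 ⟨-n, by rw [h4]; ring⟩))
    rw [geom_sum_eq hζne]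
    have hζm : ζ ^ m = 1 := by
      rw [hζ, ← Complex.exp_nat_mul]
      convert Complex.exp_int_mul_two_pi_mul_I (-(a : ℤ)) using 2
      push_cast
      field_simp
    rw [hζm]
    simp [h]

lemma sum_pi_exp (m d : ℕ) [NeZero m] (a : Fin d → ℕ) :
    ∑ y : Fin d → ZMod m,
      Complex.exp (-(2 * Real.pi * Complex.I * (∑ i, ((a i : ℂ) * ((y i).val : ℂ))) / m)) =
      if (∀ i, ((a i : ZMod m) = 0)) then ((m : ℂ) ^ d) else 0 := by
  have hterm : ∀ y : Fin d → ZMod m,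
      Complex.exp (-(2 * Real.pi * Complex.I * (∑ i, ((a i : ℂ) * (((y i)).val : ℂ))) / m))
        = ∏ i, Complex.exp (-(2 * Real.pi * Complex.I * (a i) * (((y i)).val : ℂ) / m)) := by
    intro y
    rw [← Complex.exp_sum]
    congr 1
    rw [Finset.mul_sum, Finset.sum_div, neg_eq_iff_eq_neg, Finset.sum_neg_distrib, neg_neg]
    exact Finset.sum_congr rfl (fun i _ => by ring)
  simp_rw [hterm]
  have hps := Finset.prod_univ_sum (fun _ : Fin d => (Finset.univ : Finset (ZMod m)))
    (fun i c => Complex.exp (-(2 * Real.pi * Complex.I * (a i) * ((c).val : ℂ) / m)))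
  rw [Fintype.piFinset_univ] at hps
  rw [← hps]
  simp_rw [sum_zmod_exp]
  by_cases h : ∀ i, (a i : ZMod m) = 0
  · simp [h]
  · push_neg at h
    obtain ⟨i, hi⟩ := h
    rw [if_neg (by push_neg; exact ⟨i, hi⟩)]
    exact Finset.prod_eq_zero (Finset.mem_univ i) (by simp [hi])

lemma dft_mul_sum (m d : ℕ) [NeZero m] (g h : (Fin d → ZMod m) → ℂ) :
    ∑ y : Fin d → ZMod m, dft m d g y * dft m d h y
      = ∑ x : Fin d → ZMod m, g x * h (-x) := by
  have hNne : ((m : ℂ)) ^ d ≠ 0 := pow_ne_zero _ (Nat.cast_ne_zero.2 (NeZero.ne m))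
  have hc : (((Real.sqrt (m ^ d) : ℝ) : ℂ))⁻¹ * (((Real.sqrt (m ^ d) : ℝ) : ℂ))⁻¹
      = (((m : ℂ)) ^ d)⁻¹ := by
    rw [← mul_inv, ← Complex.ofReal_mul, Real.mul_self_sqrt (by positivity)]
    push_cast; ring
  unfold dft
  simp_rw [mul_mul_mul_comm]
  rw [← Finset.mul_sum, hc]
  have hexp : ∀ x z y : Fin d → ZMod m,
      Complex.exp (-(2 * Real.pi * Complex.I * (∑ i, ((x i).val : ℂ) * ((y i).val : ℂ)) / m)) *
      Complex.exp (-(2 * Real.pi * Complex.I * (∑ i, ((z i).val : ℂ) * ((y i).val : ℂ)) / m))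
      = Complex.exp (-(2 * Real.pi * Complex.I *
          (∑ i, ((((x i).val + (z i).val : ℕ) : ℂ) * ((y i).val : ℂ))) / m)) := by
    intro x z y
    rw [← Complex.exp_add]
    congr 1
    have hs : (∑ i, ((((x i).val + (z i).val : ℕ) : ℂ) * ((y i).val : ℂ)))
        = (∑ i, ((x i).val : ℂ) * ((y i).val : ℂ)) + (∑ i, ((z i).val : ℂ) * ((y i).val : ℂ)) := by
      rw [← Finset.sum_add_distrib]
      exact Finset.sum_congr rfl fun i _ => by push_cast; ring
    rw [hs]; ring
  have key : ∑ y : Fin d → ZMod m,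
      ((∑ x : Fin d → ZMod m, g x *
        Complex.exp (-(2 * Real.pi * Complex.I * (∑ i, ((x i).val : ℂ) * ((y i).val : ℂ)) / m))) *
      (∑ z : Fin d → ZMod m, h z *
        Complex.exp (-(2 * Real.pi * Complex.I * (∑ i, ((z i).val : ℂ) * ((y i).val : ℂ)) / m))))
      = ((m : ℂ)) ^ d * ∑ x : Fin d → ZMod m, g x * h (-x) := by
    simp_rw [Finset.sum_mul_sum]
    rw [Finset.sum_comm]
    have step1 : ∀ x : Fin d → ZMod m,
        ∑ y : Fin d → ZMod m, ∑ z : Fin d → ZMod m,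
          (g x * Complex.exp (-(2 * Real.pi * Complex.I * (∑ i, ((x i).val : ℂ) * ((y i).val : ℂ)) / m))) *
          (h z * Complex.exp (-(2 * Real.pi * Complex.I * (∑ i, ((z i).val : ℂ) * ((y i).val : ℂ)) / m)))
        = ((m : ℂ)) ^ d * (g x * h (-x)) := by
      intro x
      rw [Finset.sum_comm]
      have step2 : ∀ z : Fin d → ZMod m,
          ∑ y : Fin d → ZMod m,
            (g x * Complex.exp (-(2 * Real.pi * Complex.I * (∑ i, ((x i).val : ℂ) * ((y i).val : ℂ)) / m))) *
            (h z * Complex.exp (-(2 * Real.pi * Complex.I * (∑ i, ((z i).val : ℂ) * ((y i).val : ℂ)) / m)))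
          = g x * h z * (if z = -x then ((m : ℂ)) ^ d else 0) := by
        intro z
        simp_rw [mul_mul_mul_comm, hexp]
        rw [← Finset.mul_sum, sum_pi_exp m d (fun i => (x i).val + (z i).val)]
        congr 1
        have hcond : (∀ i, ((((x i).val + (z i).val : ℕ)) : ZMod m) = 0) ↔ z = -x := by
          constructor
          · intro hall
            funext i
            have := hall i
            push_cast at this
            rw [ZMod.natCast_rightInverse, ZMod.natCast_rightInverse] at this
            have : z i = -(x i) := by linear_combination this
            simpa using this
          · intro hz
            intro i
            push_cast
            rw [ZMod.natCast_rightInverse, ZMod.natCast_rightInverse, hz]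
            simp
        simp only [hcond]
      simp_rw [step2]
      simp_rw [mul_ite, mul_zero]
      rw [Finset.sum_ite_eq' Finset.univ (-x) (fun z => g x * h z * ((m : ℂ)) ^ d)]
      simp [mul_comm, mul_assoc, mul_left_comm]
    simp_rw [step1]
    rw [← Finset.mul_sum]
  rw [key, ← mul_assoc, inv_mul_cancel₀ hNne, one_mul]

lemma znorm_pos (m d : ℕ) [NeZero m] {x : Fin d → ZMod m} (hx : x ≠ 0) :
    0 < znorm m d x := by
  rw [znorm, Real.sqrt_pos]
  obtain ⟨i, hi⟩ := Function.ne_iff.1 hx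
  refine Finset.sum_pos' (fun j _ => sq_nonneg _) ⟨i, Finset.mem_univ i, ?_⟩
  have hs : srep m (x i) ≠ 0 := by
    intro h0
    apply hi
    unfold srep at h0
    split_ifs at h0 with h
    · have : (x i).val = 0 := by exact_mod_cast h0
      simpa [ZMod.val_eq_zero] using this
    · have hlt := ZMod.val_lt (x i)
      omega
  have hne : ((srep m (x i) : ℝ)) ≠ 0 := Int.cast_ne_zero.2 hs
  positivity

theorem discrete_weak_duality (m d : ℕ) [NeZero m] (hd : 0 < d) (r : ℝ) (hr : 0 < r)
    (μ lam : (Fin d → ZMod m) → ℝ)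
    (hμeven : ∀ x, μ (-x) = μ x) (hlameven : ∀ y, lam (-y) = lam y)
    (hlam : ∀ y, (lam y : ℂ) = dft m d (fun x => (μ x : ℂ)) y)
    (hlam_nonneg : ∀ y, 0 ≤ lam y)
    (hμ_nonneg : ∀ x, r ≤ znorm m d x → 0 ≤ μ x)
    (hμ_zero : ∀ x, 0 < znorm m d x → znorm m d x < r → μ x = 0)
    (hμ0 : μ 0 = (r / 2) ^ d) :
    ∀ f : (Fin d → ZMod m) → ℝ, (∀ x, f (-x) = f x) →
      (Real.sqrt ((m : ℝ) ^ d))⁻¹ ≤ (dft m d (fun x => (f x : ℂ)) 0).re →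
      (∀ x, r ≤ znorm m d x → f x ≤ 0) →
      (∀ y, 0 ≤ (dft m d (fun x => (f x : ℂ)) y).re) →
      (Real.sqrt ((m : ℝ) ^ d))⁻¹ * lam 0 ≤ (r / 2) ^ d * f 0 := by
  intro f hfeven hf0 hfle hfhat
  set F := dft m d (fun x => (f x : ℂ)) with hF
  have hC : ∑ y : Fin d → ZMod m, (lam y : ℂ) * F y
      = ∑ x : Fin d → ZMod m, (μ x : ℂ) * (f (-x) : ℂ) := by
    simp_rw [hlam, hF]
    exact dft_mul_sum m d _ _
  have hR : ∑ y : Fin d → ZMod m, lam y * (F y).re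
      = ∑ x : Fin d → ZMod m, μ x * f x := by
    have := congrArg Complex.re hC
    rw [Complex.re_sum, Complex.re_sum] at this
    simp only [Complex.mul_re, Complex.ofReal_re, Complex.ofReal_im, zero_mul, sub_zero,
      mul_zero] at this
    simpa [hfeven] using this
  have h1 : lam 0 * (F 0).re ≤ ∑ y : Fin d → ZMod m, lam y * (F y).re :=
    Finset.single_le_sum (f := fun y => lam y * (F y).re)
      (fun y _ => mul_nonneg (hlam_nonneg y) (hfhat y)) (Finset.mem_univ 0)
  have h2 : (Real.sqrt ((m : ℝ) ^ d))⁻¹ * lam 0 ≤ lam 0 * (F 0).re := by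
    rw [mul_comm]
    exact mul_le_mul_of_nonneg_left hf0 (hlam_nonneg 0)
  have h3 : ∑ x : Fin d → ZMod m, μ x * f x ≤ (r / 2) ^ d * f 0 := by
    rw [← hμ0, ← Finset.add_sum_erase _ _ (Finset.mem_univ (0 : Fin d → ZMod m))]
    have hrest : ∑ x ∈ Finset.univ.erase (0 : Fin d → ZMod m), μ x * f x ≤ 0 := by
      refine Finset.sum_nonpos fun x hx => ?_
      have hx0 : x ≠ 0 := Finset.ne_of_mem_erase hx
      have hzp : 0 < znorm m d x := znorm_pos m d hx0
      by_cases hcase : znorm m d x < r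
      · rw [hμ_zero x hzp hcase, zero_mul]
      · push_neg at hcase
        exact mul_nonpos_of_nonneg_of_nonpos (hμ_nonneg x hcase) (hfle x hcase)
    linarith
  linarith
end

section
/- For every integer $k \ge 2$ and even integer $b$ with $0 \le b \le 2k+1$ and integers $a, c \ge 0$ with $a + b + c = 2k+1$, the quantity $\binom{2k+1}{b} + k(-1)^{b/2}\binom{k}{b/2} + (k+1)\frac{a-c}{a+c}(-1)^{b/2}\binom{k}{b/2}$ is nonnegative (interpreting the middle fraction as any value in $[-1,1]$ when convenient; in particular it suffices that $\binom{2k+1}{b} + k(-1)^{b/2}\binom{k}{b/2} \ge (k+1)\binom{k}{b/2}$). -/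
open Finset in
lemma two_term_vdm (k j : ℕ) (h1 : 1 ≤ j) (hj : j ≤ k) :
    2 * j * Nat.choose k j ≤ Nat.choose (2 * k) (2 * j - 1) := by
  have hj1 : j ≤ Nat.choose k (j - 1) := by
    rcases Nat.eq_or_lt_of_le h1 with h | h
    · simp [← h]
    · have hjj : Nat.choose j (j - 1) = j := by
        have h2 : Nat.choose j (j - (j-1)) = Nat.choose j (j-1) := Nat.choose_symm (Nat.sub_le j 1)
        have h3 : j - (j - 1) = 1 := by omega
        rw [h3, Nat.choose_one_right] at h2
        omega
      calc j = Nat.choose j (j - 1) := hjj.symm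
          _ ≤ Nat.choose k (j - 1) := Nat.choose_le_choose _ hj
  have hvdm : Nat.choose (2 * k) (2 * j - 1)
      = ∑ ij ∈ Finset.HasAntidiagonal.antidiagonal (2 * j - 1),
          Nat.choose k ij.1 * Nat.choose k ij.2 := by
    rw [two_mul, Nat.add_choose_eq]
  have hsub : ({(j, j - 1), (j - 1, j)} : Finset (ℕ × ℕ))
      ⊆ Finset.HasAntidiagonal.antidiagonal (2 * j - 1) := by
    intro x hx
    simp only [Finset.mem_insert, Finset.mem_singleton] at hx
    rcases hx with h | h <;> subst h <;>
      simp [Finset.mem_antidiagonal] <;> omega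
  have hne : (j, j - 1) ≠ (j - 1, j) := by
    intro h
    have := congrArg Prod.fst h
    omega
  have hsum : Nat.choose k j * Nat.choose k (j - 1)
      + Nat.choose k (j - 1) * Nat.choose k j
      ≤ ∑ ij ∈ Finset.HasAntidiagonal.antidiagonal (2 * j - 1),
          Nat.choose k ij.1 * Nat.choose k ij.2 := by
    calc Nat.choose k j * Nat.choose k (j - 1)
        + Nat.choose k (j - 1) * Nat.choose k j
        = ∑ ij ∈ ({(j, j - 1), (j - 1, j)} : Finset (ℕ × ℕ)),
            Nat.choose k ij.1 * Nat.choose k ij.2 := by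
          rw [Finset.sum_insert (by simp [hne]), Finset.sum_singleton]
      _ ≤ _ := Finset.sum_le_sum_of_subset hsub
  rw [hvdm]
  calc 2 * j * Nat.choose k j ≤ 2 * Nat.choose k (j - 1) * Nat.choose k j := by
        have := Nat.mul_le_mul_right (Nat.choose k j) (Nat.mul_le_mul_left 2 hj1)
        linarith
    _ = Nat.choose k j * Nat.choose k (j - 1) + Nat.choose k (j - 1) * Nat.choose k j := by ring
    _ ≤ _ := hsum

lemma key_ineq (k j : ℕ) (h1 : 1 ≤ j) (hj : j ≤ k) :
    (2 * k + 1) * Nat.choose k j ≤ Nat.choose (2 * k + 1) (2 * j) := by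
  have hid := Nat.add_one_mul_choose_eq (2 * k) (2 * j - 1)
  have h2j : 2 * j - 1 + 1 = 2 * j := by omega
  simp only [Nat.succ_eq_add_one, h2j] at hid
  -- hid : (2k+1) * choose (2k) (2j-1) = choose (2k+1) (2j) * (2j)
  have h1' := two_term_vdm k j h1 hj
  have : (2 * k + 1) * Nat.choose k j * (2 * j) ≤ Nat.choose (2 * k + 1) (2 * j) * (2 * j) := by
    calc (2 * k + 1) * Nat.choose k j * (2 * j)
        = (2 * k + 1) * (2 * j * Nat.choose k j) := by ring
      _ ≤ (2 * k + 1) * Nat.choose (2 * k) (2 * j - 1) :=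
          Nat.mul_le_mul_left _ h1'
      _ = Nat.choose (2 * k + 1) (2 * j) * (2 * j) := hid
  exact Nat.le_of_mul_le_mul_right this (by omega)

theorem dual_nonneg_quantity (k a b c : ℕ) (hk : 2 ≤ k) (hb : Even b)
    (hsum : a + b + c = 2 * k + 1) :
    0 ≤ (Nat.choose (2 * k + 1) b : ℚ)
        + (k : ℚ) * (-1) ^ (b / 2) * (Nat.choose k (b / 2) : ℚ)
        + ((k : ℚ) + 1) * (((a : ℚ) - (c : ℚ)) / ((a : ℚ) + (c : ℚ)))
            * (-1) ^ (b / 2) * (Nat.choose k (b / 2) : ℚ) := by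
  obtain ⟨j, hj2⟩ := hb
  have hbj : b = 2 * j := by omega
  subst hbj
  have hjd : 2 * j / 2 = j := by omega
  rw [hjd]
  have hjk : j ≤ k := by omega
  have hac : 1 ≤ a + c := by omega
  set C : ℚ := (Nat.choose k j : ℚ) with hC
  set N : ℚ := (Nat.choose (2 * k + 1) (2 * j) : ℚ) with hN
  have hC0 : 0 ≤ C := by positivity
  -- bound on q
  have hS : (0 : ℚ) < (a : ℚ) + (c : ℚ) := by
    have : (1 : ℚ) ≤ (a : ℚ) + (c : ℚ) := by exact_mod_cast hac
    linarith
  set q : ℚ := ((a : ℚ) - (c : ℚ)) / ((a : ℚ) + (c : ℚ)) with hq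
  have hq1 : -1 ≤ q := by
    rw [hq, le_div_iff₀ hS]
    have : (0:ℚ) ≤ (a:ℚ) := by positivity
    linarith
  have hq2 : q ≤ 1 := by
    rw [hq, div_le_iff₀ hS]
    have : (0:ℚ) ≤ (c:ℚ) := by positivity
    linarith
  -- choose bounds
  have hkey : 1 ≤ j → (2 * (k:ℚ) + 1) * C ≤ N := by
    intro h1
    have := key_ineq k j h1 hjk
    have h2 : (((2 * k + 1) * Nat.choose k j : ℕ) : ℚ) ≤ N := by rw [hN]; exact_mod_cast this
    rw [hC]
    push_cast at h2 ⊢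
    linarith
  rcases Nat.even_or_odd j with he | ho
  · -- (-1)^j = 1
    have hs : ((-1 : ℚ)) ^ j = 1 := he.neg_one_pow
    rw [hs]
    have hCN : C ≤ N := by
      rcases Nat.eq_zero_or_pos j with h0 | h1
      · subst h0; simp [hC, hN]
      · have := hkey h1
        have hk0 : (0:ℚ) ≤ (k:ℚ) := by positivity
        nlinarith
    nlinarith [mul_le_mul_of_nonneg_right (neg_le_iff_add_nonneg.mp hq1) hC0]
  · have hs : ((-1 : ℚ)) ^ j = -1 := ho.neg_one_pow
    rw [hs]
    have h1 : 1 ≤ j := ho.pos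
    have := hkey h1
    have hk0 : (0:ℚ) ≤ (k:ℚ) := by positivity
    nlinarith [mul_le_mul_of_nonneg_right hq2 hC0, mul_le_mul_of_nonneg_right hq1 hC0]
end

section
/- For every integer $k \ge 2$ and even integer $b$ with $2 \le b \le 2k$, one has $\binom{2k+1}{b} \ge (2k+1)\binom{k}{b/2}$. -/
lemma choose_aux (k : ℕ) : ∀ j : ℕ, 1 ≤ j → 2 * j ≤ k + 1 →
    (2 * k + 1) * Nat.choose k j ≤ Nat.choose (2 * k + 1) (2 * j) := by
  intro j
  induction j with
  | zero => omega
  | succ j ih =>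
    intro _ hjk
    rcases Nat.eq_zero_or_pos j with rfl | hj1
    · -- base case j+1 = 1 : need (2k+1)*C(k,1) ≤ C(2k+1,2)
      have h2 : Nat.choose (2*k+1) 2 * 2 = Nat.choose (2*k+1) 1 * (2*k+1 - 1) :=
        Nat.choose_succ_right_eq (2*k+1) 1
      rw [Nat.choose_one_right] at h2
      have e : 2*k+1 - 1 = 2*k := by omega
      rw [e] at h2
      have h2' : Nat.choose (2*k+1) 2 * 2 = ((2*k+1)*k) * 2 := by rw [h2]; ring
      have h2'' : Nat.choose (2*k+1) 2 = (2*k+1)*k :=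
        Nat.eq_of_mul_eq_mul_right (by norm_num) h2'
      have hk1 : Nat.choose k 1 = k := Nat.choose_one_right k
      have : 2 * 1 = 2 := rfl
      rw [this, hk1, h2'']
    · -- step
      have hj2 : 2 * j ≤ k + 1 := by omega
      have IH := ih hj1 hj2
      have hjle : j ≤ k := by omega
      set m := k - j with hm
      have hkm : k = j + m := by omega
      have hjm : j + 1 ≤ m := by omega
      have h1 : Nat.choose k (j+1) * (j+1) = Nat.choose k j * (k - j) :=
        Nat.choose_succ_right_eq k j
      have h2 : Nat.choose (2*k+1) (2*j+1) * (2*j+1)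
          = Nat.choose (2*k+1) (2*j) * (2*k+1 - 2*j) :=
        Nat.choose_succ_right_eq (2*k+1) (2*j)
      have h3 : Nat.choose (2*k+1) (2*j+2) * (2*j+2)
          = Nat.choose (2*k+1) (2*j+1) * (2*k+1 - (2*j+1)) :=
        Nat.choose_succ_right_eq (2*k+1) (2*j+1)
      have e1 : k - j = m := rfl
      have e2 : 2*k+1 - 2*j = 2*m+1 := by omega
      have e3 : 2*k+1 - (2*j+1) = 2*m := by omega
      rw [e1] at h1; rw [e2] at h2; rw [e3] at h3
      set A := Nat.choose k j
      set A' := Nat.choose k (j+1)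
      set B := Nat.choose (2*k+1) (2*j)
      set C1 := Nat.choose (2*k+1) (2*j+1)
      set B' := Nat.choose (2*k+1) (2*j+2)
      have goal2 : 2 * (j+1) = 2*j+2 := by ring
      rw [goal2]
      -- want (2k+1)*A' ≤ B'
      -- multiply both sides by (j+1)*(2j+1)*(2j+2) > 0
      have hpos : 0 < (j+1)*((2*j+1)*(2*j+2)) := by positivity
      refine Nat.le_of_mul_le_mul_right ?_ hpos
      -- LHS: (2k+1)*A'*((j+1)*((2j+1)*(2j+2)))
      --    = (2k+1)*(A*m)*((2j+1)*(2j+2))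
      -- RHS: B'*((j+1)*((2j+1)*(2j+2))) = (C1*(2m))*((j+1)*(2j+1))
      --    = (B*(2m+1))*(2m)*(j+1)
      have key : (2*k+1) * (A * m) * ((2*j+1)*(2*j+2)) ≤ (B*(2*m+1))*(2*m*(j+1)) := by
        have h4 : (2*k+1) * A ≤ B := IH
        have h5 : 2*j+1 ≤ 2*m+1 := by omega
        calc (2*k+1) * (A * m) * ((2*j+1)*(2*j+2))
            = ((2*k+1)*A*(2*j+1)) * (2*m*(j+1)) := by ring
          _ ≤ (B*(2*m+1)) * (2*m*(j+1)) := by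
              exact Nat.mul_le_mul_right _ (Nat.mul_le_mul h4 h5)
      calc (2*k+1) * A' * ((j+1)*((2*j+1)*(2*j+2)))
          = (2*k+1) * (A' * (j+1)) * ((2*j+1)*(2*j+2)) := by ring
        _ = (2*k+1) * (A * m) * ((2*j+1)*(2*j+2)) := by rw [h1]
        _ ≤ (B*(2*m+1))*(2*m*(j+1)) := key
        _ = (C1 * (2*j+1))*(2*m*(j+1)) := by rw [h2]
        _ = (C1 * (2*m)) * ((j+1)*(2*j+1)) := by ring
        _ = (B' * (2*j+2)) * ((j+1)*(2*j+1)) := by rw [h3]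
        _ = B' * ((j+1)*((2*j+1)*(2*j+2))) := by ring

theorem choose_succ_ineq (k b : ℕ) (hk : 2 ≤ k) (hb : Even b) (hb2 : 2 ≤ b)
    (hble : b ≤ 2 * k) :
    (2 * k + 1) * Nat.choose k (b / 2) ≤ Nat.choose (2 * k + 1) b := by
  obtain ⟨j, hj⟩ := hb
  have hbj : b = 2 * j := by omega
  subst hbj
  have hj1 : 1 ≤ j := by omega
  have hjk : j ≤ k := by omega
  have hdiv : 2 * j / 2 = j := by omega
  rw [hdiv]
  by_cases hcase : 2 * j ≤ k + 1
  · exact choose_aux k j hj1 hcase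
  · rcases Nat.eq_or_lt_of_le hjk with rfl | hjlt
    · -- j = k
      have h1 : Nat.choose (2*j+1) (2*j) = Nat.choose (2*j+1) 1 := by
        rw [← Nat.choose_symm (by omega : 2*j ≤ 2*j+1)]
        congr 1
        omega
      rw [h1, Nat.choose_one_right, Nat.choose_self]
      omega
    · -- k+1 < 2j < 2k : use symmetry
      set j' := k - j with hj'
      have hj'1 : 1 ≤ j' := by omega
      have hj'k : 2 * j' ≤ k + 1 := by omega
      have haux := choose_aux k j' hj'1 hj'k
      have hsymm : Nat.choose k j = Nat.choose k j' := by
        rw [← Nat.choose_symm hjk]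
      have h1 : Nat.choose (2*k+1) (2*j) = Nat.choose (2*k+1) (2*j'+1) := by
        rw [← Nat.choose_symm (by omega : 2*j ≤ 2*k+1)]
        congr 1
        omega
      have hmono : Nat.choose (2*k+1) (2*j') ≤ Nat.choose (2*k+1) (2*j'+1) := by
        apply Nat.choose_le_succ_of_lt_half_left
        omega
      rw [hsymm, h1]
      exact le_trans haux hmono
end
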